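/- There exist constants c > 0 and C > 0 such that for every λ ∈ (0,1] and every real Λ₁ ≥ 1, λ · ∑_{p ∈ ℤ², 1+|p|² > Λ₁²} 1/(exp(λ(1+|p|²)) − 1) ≤ C · log(1/(1 − exp(−c λ Λ₁²))). -/

import Mathlib

open scoped ENNReal

/-- Squared Euclidean norm on `ℤ²`. -/
noncomputable def nsq (p : ℤ × ℤ) : ℝ := (p.1 : ℝ) ^ 2 + (p.2 : ℝ) ^ 2

open Filter Topology

lemma nsq_nonneg (p : ℤ × ℤ) : 0 ≤ nsq p := by unfold nsq; positivity

/-- For `X > 0`, `1/(e^X - 1) ≤ e^{-X/2}/X`. -/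
lemma aux_inv_exp_sub_one {X : ℝ} (hX : 0 < X) :
    1 / (Real.exp X - 1) ≤ Real.exp (-(X / 2)) / X := by
  have hs : X / 2 ≤ Real.sinh (X / 2) := Real.self_le_sinh_iff.2 (by linarith)
  have hsinh : Real.sinh (X / 2) = (Real.exp (X / 2) - Real.exp (-(X / 2))) / 2 :=
    Real.sinh_eq _
  have hexp : Real.exp (X / 2) * Real.exp (X / 2) = Real.exp X := by
    rw [← Real.exp_add]; ring_nf
  have hexp2 : Real.exp (X / 2) * Real.exp (-(X / 2)) = 1 := by
    rw [← Real.exp_add]; simp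
  have h3 : X ≤ Real.exp (X / 2) - Real.exp (-(X / 2)) := by
    rw [hsinh] at hs; linarith
  have hkey : X * Real.exp (X / 2) ≤ Real.exp X - 1 := by
    nlinarith [Real.exp_pos (X / 2)]
  have h1 : 0 < X * Real.exp (X / 2) := by positivity
  calc 1 / (Real.exp X - 1) ≤ 1 / (X * Real.exp (X / 2)) :=
        one_div_le_one_div_of_le h1 hkey
    _ = Real.exp (-(X / 2)) / X := by
        rw [Real.exp_neg]
        field_simp

/-- The majorant `x^i/(i·Λsq)`. -/
noncomputable def Mfa (x Λsq : ℝ) (i : ℕ) : ℝ := x ^ i / (i * Λsq)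

lemma aux_mono {x Λsq : ℝ} (hx0 : 0 ≤ x) (hx1 : x ≤ 1) (hΛ : 1 ≤ Λsq)
    {i : ℕ} (hi : 1 ≤ i) : Mfa x Λsq (i + 1) ≤ Mfa x Λsq i := by
  have hi' : (1 : ℝ) ≤ (i : ℝ) := by exact_mod_cast hi
  unfold Mfa
  apply div_le_div₀ (pow_nonneg hx0 i) (pow_le_pow_of_le_one hx0 hx1 i.le_succ)
    (by nlinarith) (by push_cast; nlinarith)

lemma aux_telescope {x Λsq : ℝ} (hx0 : 0 ≤ x) (hx1 : x < 1) (hΛ : 1 ≤ Λsq)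
    {j : ℕ} (hj : 1 ≤ j) :
    HasSum (fun n : ℕ => Mfa x Λsq (j + n) - Mfa x Λsq (j + n + 1)) (Mfa x Λsq j) := by
  have hnn : ∀ n : ℕ, 0 ≤ Mfa x Λsq (j + n) - Mfa x Λsq (j + n + 1) := fun n =>
    sub_nonneg.2 (aux_mono hx0 hx1.le hΛ (le_trans hj (Nat.le_add_right _ _)))
  rw [hasSum_iff_tendsto_nat_of_nonneg hnn]
  have hps : ∀ N : ℕ, ∑ n ∈ Finset.range N, (Mfa x Λsq (j + n) - Mfa x Λsq (j + n + 1))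
      = Mfa x Λsq j - Mfa x Λsq (j + N) := by
    intro N
    simpa [add_assoc] using Finset.sum_range_sub' (fun n => Mfa x Λsq (j + n)) N
  simp only [hps]
  have h0 : Tendsto (fun N : ℕ => Mfa x Λsq (j + N)) atTop (𝓝 0) := by
    apply squeeze_zero (g := fun n : ℕ => x ^ j * x ^ n)
    · intro n
      unfold Mfa
      apply div_nonneg (pow_nonneg hx0 _)
      have : (1 : ℝ) ≤ ((j + n : ℕ) : ℝ) := by
        exact_mod_cast le_trans hj (Nat.le_add_right _ _)
      nlinarith
    · intro n
      have hd : (1 : ℝ) ≤ ((j + n : ℕ) : ℝ) * Λsq := by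
        have : (1 : ℝ) ≤ ((j + n : ℕ) : ℝ) := by
          exact_mod_cast le_trans hj (Nat.le_add_right _ _)
        nlinarith
      calc Mfa x Λsq (j + n) ≤ x ^ (j + n) := div_le_self (pow_nonneg hx0 _) hd
        _ = x ^ j * x ^ n := pow_add x j n
    · have := (tendsto_pow_atTop_nhds_zero_of_lt_one hx0 hx1).const_mul (x ^ j)
      simpa using this
  simpa using (tendsto_const_nhds.sub h0)

set_option maxHeartbeats 1000000 in
/-- Free high-frequency tail: for `λ ∈ (0,1]` and `Λ₁ ≥ 1`,
`λ ∑_{h(p) > Λ₁²} 1/(e^{λ h(p)} - 1) ≤ C log(1/(1 - e^{-c λ Λ₁²}))`. -/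
theorem free_high_frequency_tail :
    ∃ c C : ℝ, 0 < c ∧ 0 < C ∧
      ∀ lam : ℝ, lam ∈ Set.Ioc (0 : ℝ) 1 → ∀ Λ₁ : ℝ, 1 ≤ Λ₁ →
        ENNReal.ofReal lam *
          ∑' p : {p : ℤ × ℤ // Λ₁ ^ 2 < 1 + nsq p},
            ENNReal.ofReal (1 / (Real.exp (lam * (1 + nsq p.1)) - 1)) ≤
        ENNReal.ofReal (C * Real.log (1 / (1 - Real.exp (-(c * lam * Λ₁ ^ 2))))) := by
  refine ⟨1/2, 18, by norm_num, by norm_num, ?_⟩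
  intro lam hlam Λ₁ hΛ
  obtain ⟨hl0, hl1⟩ := hlam
  have hΛsq : (1 : ℝ) ≤ Λ₁ ^ 2 := by nlinarith
  have hΛsq0 : (0 : ℝ) < Λ₁ ^ 2 := by nlinarith
  set x : ℝ := Real.exp (-(1/2 * lam * Λ₁ ^ 2)) with hxdef
  have hx0 : 0 < x := Real.exp_pos _
  have hx1 : x < 1 := by
    rw [hxdef, Real.exp_lt_one_iff]
    nlinarith
  have h1x : 0 < 1 - x := by linarith
  set L : ℝ := Real.log (1 / (1 - x)) with hLdef
  have hLlog : L = -Real.log (1 - x) := by rw [hLdef, one_div, Real.log_inv]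
  have hxL : x ≤ L := by
    have := Real.log_le_sub_one_of_pos h1x
    rw [hLlog]; linarith
  have hL0 : 0 ≤ L := le_trans hx0.le hxL
  -- the annulus index
  set jp : {p : ℤ × ℤ // Λ₁ ^ 2 < 1 + nsq p} → ℕ :=
    fun p => ⌈(1 + nsq p.1) / Λ₁ ^ 2⌉₊ - 1 with hjpdef
  have hpfacts : ∀ p : {p : ℤ × ℤ // Λ₁ ^ 2 < 1 + nsq p},
      1 ≤ jp p ∧ (jp p : ℝ) * Λ₁ ^ 2 < 1 + nsq p.1 := by
    intro p
    have hp := p.2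
    have hr1 : 1 < (1 + nsq p.1) / Λ₁ ^ 2 := (one_lt_div hΛsq0).2 hp
    have hr0 : 0 ≤ (1 + nsq p.1) / Λ₁ ^ 2 := by positivity
    have hceil : 1 < ⌈(1 + nsq p.1) / Λ₁ ^ 2⌉₊ := by
      rw [Nat.lt_ceil]; exact_mod_cast hr1
    have hj1 : 1 ≤ jp p := by simp only [hjpdef]; omega
    refine ⟨hj1, ?_⟩
    have hcast : (jp p : ℝ) = (⌈(1 + nsq p.1) / Λ₁ ^ 2⌉₊ : ℝ) - 1 := by
      rw [hjpdef]
      push_cast [Nat.cast_sub (le_of_lt hceil)]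
      ring
    have hlt : (⌈(1 + nsq p.1) / Λ₁ ^ 2⌉₊ : ℝ) < (1 + nsq p.1) / Λ₁ ^ 2 + 1 :=
      Nat.ceil_lt_add_one hr0
    have hjr : (jp p : ℝ) < (1 + nsq p.1) / Λ₁ ^ 2 := by rw [hcast]; linarith
    calc (jp p : ℝ) * Λ₁ ^ 2 < ((1 + nsq p.1) / Λ₁ ^ 2) * Λ₁ ^ 2 :=
          mul_lt_mul_of_pos_right hjr hΛsq0
      _ = 1 + nsq p.1 := div_mul_cancel₀ _ (ne_of_gt hΛsq0)
  have hjle : ∀ p : {p : ℤ × ℤ // Λ₁ ^ 2 < 1 + nsq p}, ∀ i : ℕ,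
      jp p ≤ i → 1 + nsq p.1 ≤ ((i : ℝ) + 1) * Λ₁ ^ 2 := by
    intro p i hji
    have hceil1 : 1 ≤ ⌈(1 + nsq p.1) / Λ₁ ^ 2⌉₊ := by
      have := (hpfacts p).1
      simp only [hjpdef] at this
      omega
    have h1 : ⌈(1 + nsq p.1) / Λ₁ ^ 2⌉₊ ≤ i + 1 := by
      simp only [hjpdef] at hji; omega
    have h2 : (1 + nsq p.1) / Λ₁ ^ 2 ≤ ((i + 1 : ℕ) : ℝ) := Nat.ceil_le.1 h1
    rw [div_le_iff₀ hΛsq0] at h2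
    push_cast at h2 ⊢
    linarith
  -- step 1: pull lam inside
  have step1 : ENNReal.ofReal lam *
      ∑' p : {p : ℤ × ℤ // Λ₁ ^ 2 < 1 + nsq p},
        ENNReal.ofReal (1 / (Real.exp (lam * (1 + nsq p.1)) - 1))
      = ∑' p : {p : ℤ × ℤ // Λ₁ ^ 2 < 1 + nsq p},
        ENNReal.ofReal (lam * (1 / (Real.exp (lam * (1 + nsq p.1)) - 1))) := by
    rw [← ENNReal.tsum_mul_left]
    exact tsum_congr fun p => (ENNReal.ofReal_mul hl0.le).symm
  -- step 2: termwise bound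
  have step2 : ∀ p : {p : ℤ × ℤ // Λ₁ ^ 2 < 1 + nsq p},
      ENNReal.ofReal (lam * (1 / (Real.exp (lam * (1 + nsq p.1)) - 1)))
      ≤ ENNReal.ofReal (Mfa x (Λ₁ ^ 2) (jp p)) := by
    intro p
    apply ENNReal.ofReal_le_ofReal
    obtain ⟨hj1, hjh⟩ := hpfacts p
    have hh0 : 0 < 1 + nsq p.1 := by nlinarith [p.2]
    have hX : 0 < lam * (1 + nsq p.1) := mul_pos hl0 hh0
    have b1 : 1 / (Real.exp (lam * (1 + nsq p.1)) - 1)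
        ≤ Real.exp (-(lam * (1 + nsq p.1) / 2)) / (lam * (1 + nsq p.1)) :=
      aux_inv_exp_sub_one hX
    have hj1' : (1 : ℝ) ≤ (jp p : ℝ) := by exact_mod_cast hj1
    have hjΛ : 0 < (jp p : ℝ) * Λ₁ ^ 2 := by nlinarith
    have b2 : Real.exp (-(lam * (1 + nsq p.1) / 2)) ≤ x ^ jp p := by
      rw [hxdef, ← Real.exp_nat_mul]
      apply Real.exp_le_exp.2
      nlinarith [mul_le_mul_of_nonneg_left hjh.le hl0.le]
    calc lam * (1 / (Real.exp (lam * (1 + nsq p.1)) - 1))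
        ≤ lam * (Real.exp (-(lam * (1 + nsq p.1) / 2)) / (lam * (1 + nsq p.1))) :=
          mul_le_mul_of_nonneg_left b1 hl0.le
      _ = Real.exp (-(lam * (1 + nsq p.1) / 2)) / (1 + nsq p.1) := by
          field_simp
      _ ≤ x ^ jp p / ((jp p : ℝ) * Λ₁ ^ 2) :=
          div_le_div₀ (pow_nonneg hx0.le _) b2 hjΛ hjh.le
      _ = Mfa x (Λ₁ ^ 2) (jp p) := rfl
  -- step 3: telescope + reindex
  have step3 : ∀ p : {p : ℤ × ℤ // Λ₁ ^ 2 < 1 + nsq p},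
      ENNReal.ofReal (Mfa x (Λ₁ ^ 2) (jp p))
      = ∑' i : ℕ, (if jp p ≤ i then
          ENNReal.ofReal (Mfa x (Λ₁ ^ 2) i - Mfa x (Λ₁ ^ 2) (i + 1)) else 0) := by
    intro p
    obtain ⟨hj1, -⟩ := hpfacts p
    have hts := aux_telescope hx0.le hx1 hΛsq hj1
    have hnn : ∀ n : ℕ, 0 ≤ Mfa x (Λ₁ ^ 2) (jp p + n) - Mfa x (Λ₁ ^ 2) (jp p + n + 1) :=
      fun n => sub_nonneg.2 (aux_mono hx0.le hx1.le hΛsq (le_trans hj1 (Nat.le_add_right _ _)))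
    have e1 : ENNReal.ofReal (Mfa x (Λ₁ ^ 2) (jp p))
        = ∑' n : ℕ, ENNReal.ofReal
            (Mfa x (Λ₁ ^ 2) (jp p + n) - Mfa x (Λ₁ ^ 2) (jp p + n + 1)) := by
      rw [← hts.tsum_eq, ENNReal.ofReal_tsum_of_nonneg hnn hts.summable]
    rw [e1]
    have e2 : ∀ n : ℕ,
        ENNReal.ofReal (Mfa x (Λ₁ ^ 2) (jp p + n) - Mfa x (Λ₁ ^ 2) (jp p + n + 1))
        = (fun i : ℕ => if jp p ≤ i then
            ENNReal.ofReal (Mfa x (Λ₁ ^ 2) i - Mfa x (Λ₁ ^ 2) (i + 1)) else 0) (jp p + n) := by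
      intro n
      simp [Nat.le_add_right]
    rw [tsum_congr e2]
    exact Function.Injective.tsum_eq (g := fun n : ℕ => jp p + n)
      (f := fun i : ℕ => if jp p ≤ i then
          ENNReal.ofReal (Mfa x (Λ₁ ^ 2) i - Mfa x (Λ₁ ^ 2) (i + 1)) else 0)
      (add_right_injective (jp p))
      (by
        intro i hi
        by_cases hc : jp p ≤ i
        · exact ⟨i - jp p, by show jp p + (i - jp p) = i; omega⟩
        · simp [hc] at hi)
  -- step 5: counting
  have step5 : ∀ i : ℕ,
      (∑' p : {p : ℤ × ℤ // Λ₁ ^ 2 < 1 + nsq p},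
        (if jp p ≤ i then
          ENNReal.ofReal (Mfa x (Λ₁ ^ 2) i - Mfa x (Λ₁ ^ 2) (i + 1)) else 0))
      ≤ (if i = 0 then 0 else
          ENNReal.ofReal (9 * x ^ i / i) + ENNReal.ofReal (9 * (1 - x) * x ^ i)) := by
    intro i
    rcases Nat.eq_zero_or_pos i with hi0 | hipos
    · subst hi0
      have : ∀ p : {p : ℤ × ℤ // Λ₁ ^ 2 < 1 + nsq p},
          (if jp p ≤ 0 then
            ENNReal.ofReal (Mfa x (Λ₁ ^ 2) 0 - Mfa x (Λ₁ ^ 2) 1) else 0) = 0 := by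
        intro p
        have := (hpfacts p).1
        rw [if_neg (by omega)]
      rw [tsum_congr this, tsum_zero]
      simp
    · have hine : i ≠ 0 := by omega
      rw [if_neg hine]
      have hi1 : (1 : ℝ) ≤ (i : ℝ) := by exact_mod_cast hipos
      -- the counting finset
      set s : ℝ := Real.sqrt (((i : ℝ) + 1) * Λ₁ ^ 2) with hs
      have hssq0 : s ^ 2 = ((i : ℝ) + 1) * Λ₁ ^ 2 := Real.sq_sqrt (by positivity)
      have hs1 : 1 ≤ s := by
        nlinarith [Real.sqrt_nonneg (((i : ℝ) + 1) * Λ₁ ^ 2)]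
      set N : ℤ := ⌊s⌋ with hN
      have hN1 : (1 : ℤ) ≤ N := by
        rw [hN]
        exact Int.le_floor.2 (by exact_mod_cast hs1)
      have hNle : (N : ℝ) ≤ s := Int.floor_le s
      set Fs : Finset (ℤ × ℤ) := Finset.Icc (-N) N ×ˢ Finset.Icc (-N) N with hFs
      have hmem : ∀ p : {p : ℤ × ℤ // Λ₁ ^ 2 < 1 + nsq p}, jp p ≤ i → p.1 ∈ Fs := by
        intro p hpi
        have hb := hjle p i hpi
        have hssq : s ^ 2 = ((i : ℝ) + 1) * Λ₁ ^ 2 := Real.sq_sqrt (by positivity)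
        have key : ∀ a : ℝ, a ^ 2 ≤ nsq p.1 → |a| ≤ s := by
          intro a ha
          rw [← Real.sqrt_sq_eq_abs]
          calc Real.sqrt (a ^ 2) ≤ Real.sqrt (s ^ 2) := by
                apply Real.sqrt_le_sqrt
                unfold nsq at hb ha
                nlinarith
            _ = s := by
                rw [Real.sqrt_sq (le_trans zero_le_one hs1)]
        have h1 : |((p.1.1 : ℝ))| ≤ s := key _ (by unfold nsq; nlinarith [sq_nonneg ((p.1.2 : ℝ))])
        have h2 : |((p.1.2 : ℝ))| ≤ s := key _ (by unfold nsq; nlinarith [sq_nonneg ((p.1.1 : ℝ))])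
        rw [hFs, Finset.mem_product, Finset.mem_Icc, Finset.mem_Icc]
        rw [abs_le] at h1 h2
        constructor
        · constructor
          · rw [neg_le]
            exact Int.le_floor.2 (by push_cast; linarith [h1.1])
          · exact Int.le_floor.2 (by push_cast; linarith [h1.2])
        · constructor
          · rw [neg_le]
            exact Int.le_floor.2 (by push_cast; linarith [h2.1])
          · exact Int.le_floor.2 (by push_cast; linarith [h2.2])
      have hcount : (∑' p : {p : ℤ × ℤ // Λ₁ ^ 2 < 1 + nsq p},
          (if jp p ≤ i then (1 : ℝ≥0∞) else 0)) ≤ ENNReal.ofReal (9 * ((i : ℝ) + 1) * Λ₁ ^ 2) := by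
        calc (∑' p : {p : ℤ × ℤ // Λ₁ ^ 2 < 1 + nsq p}, (if jp p ≤ i then (1 : ℝ≥0∞) else 0))
            ≤ ∑' p : {p : ℤ × ℤ // Λ₁ ^ 2 < 1 + nsq p},
              (if p.1 ∈ Fs then (1 : ℝ≥0∞) else 0) := by
              apply ENNReal.tsum_le_tsum
              intro p
              by_cases hc : jp p ≤ i
              · rw [if_pos hc, if_pos (hmem p hc)]
              · rw [if_neg hc]; exact zero_le
          _ ≤ ∑' q : ℤ × ℤ, (if q ∈ Fs then (1 : ℝ≥0∞) else 0) :=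
              ENNReal.tsum_comp_le_tsum_of_injective Subtype.val_injective
                (fun q => if q ∈ Fs then (1 : ℝ≥0∞) else 0)
          _ = ∑ q ∈ Fs, (if q ∈ Fs then (1 : ℝ≥0∞) else 0) :=
              tsum_eq_sum (fun q hq => if_neg hq)
          _ = (Fs.card : ℝ≥0∞) := by
              rw [Finset.sum_congr rfl (fun q hq => if_pos hq)]
              simp
          _ ≤ ENNReal.ofReal (9 * ((i : ℝ) + 1) * Λ₁ ^ 2) := by
              rw [← ENNReal.ofReal_natCast]
              apply ENNReal.ofReal_le_ofReal
              have hcard : Fs.card = ((2 * N + 1).toNat) ^ 2 := by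
                rw [hFs, Finset.card_product, Int.card_Icc]
                have : N + 1 - -N = 2 * N + 1 := by ring
                rw [this, sq]
              rw [hcard]
              have h2N : ((2 * N + 1).toNat : ℤ) = 2 * N + 1 :=
                Int.toNat_of_nonneg (by linarith)
              have htn : (((2 * N + 1).toNat : ℕ) : ℝ) = 2 * (N : ℝ) + 1 := by
                exact_mod_cast congrArg (fun z : ℤ => (z : ℝ)) h2N
              push_cast [htn]
              nlinarith [hssq0, hNle, hs1]
      have hDnn : 0 ≤ Mfa x (Λ₁ ^ 2) i - Mfa x (Λ₁ ^ 2) (i + 1) :=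
        sub_nonneg.2 (aux_mono hx0.le hx1.le hΛsq hipos)
      calc (∑' p : {p : ℤ × ℤ // Λ₁ ^ 2 < 1 + nsq p},
            (if jp p ≤ i then
              ENNReal.ofReal (Mfa x (Λ₁ ^ 2) i - Mfa x (Λ₁ ^ 2) (i + 1)) else 0))
          = (∑' p : {p : ℤ × ℤ // Λ₁ ^ 2 < 1 + nsq p}, (if jp p ≤ i then (1 : ℝ≥0∞) else 0))
            * ENNReal.ofReal (Mfa x (Λ₁ ^ 2) i - Mfa x (Λ₁ ^ 2) (i + 1)) := by
            rw [← ENNReal.tsum_mul_right]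
            apply tsum_congr
            intro p
            by_cases hc : jp p ≤ i <;> simp [hc]
        _ ≤ ENNReal.ofReal (9 * ((i : ℝ) + 1) * Λ₁ ^ 2)
            * ENNReal.ofReal (Mfa x (Λ₁ ^ 2) i - Mfa x (Λ₁ ^ 2) (i + 1)) :=
            by gcongr
        _ = ENNReal.ofReal ((9 * ((i : ℝ) + 1) * Λ₁ ^ 2)
            * (Mfa x (Λ₁ ^ 2) i - Mfa x (Λ₁ ^ 2) (i + 1))) :=
            (ENNReal.ofReal_mul (by positivity)).symm
        _ ≤ ENNReal.ofReal (9 * x ^ i / i + 9 * (1 - x) * x ^ i) := by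
            apply ENNReal.ofReal_le_ofReal
            apply le_of_eq
            unfold Mfa
            have hii : (i : ℝ) ≠ 0 := by positivity
            have hΛne : Λ₁ ^ 2 ≠ 0 := ne_of_gt hΛsq0
            push_cast
            field_simp
            ring
        _ ≤ ENNReal.ofReal (9 * x ^ i / i) + ENNReal.ofReal (9 * (1 - x) * x ^ i) :=
            ENNReal.ofReal_add_le
  -- step 6: the series of the majorant
  have step6 : (∑' i : ℕ, (if i = 0 then 0 else
      ENNReal.ofReal (9 * x ^ i / i) + ENNReal.ofReal (9 * (1 - x) * x ^ i)))
      ≤ ENNReal.ofReal (18 * L) := by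
    have hsplit : (∑' i : ℕ, (if i = 0 then 0 else
        ENNReal.ofReal (9 * x ^ i / i) + ENNReal.ofReal (9 * (1 - x) * x ^ i)))
        = (∑' n : ℕ, ENNReal.ofReal (9 * x ^ (n + 1) / ((n + 1 : ℕ) : ℝ)))
          + ∑' n : ℕ, ENNReal.ofReal (9 * (1 - x) * x ^ (n + 1)) := by
      rw [tsum_eq_zero_add' ENNReal.summable]
      rw [if_pos rfl, zero_add, ← ENNReal.tsum_add]
      exact tsum_congr fun n => by rw [if_neg (Nat.succ_ne_zero n)]
    rw [hsplit]
    have hlogsum : HasSum (fun n : ℕ => 9 * (x ^ (n + 1) / (n + 1))) (9 * L) := by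
      rw [hLlog]
      exact (Real.hasSum_pow_div_log_of_abs_lt_one
        (by rw [abs_of_nonneg hx0.le]; exact hx1)).mul_left 9
    have hgeosum : HasSum (fun n : ℕ => 9 * (1 - x) * x ^ (n + 1)) (9 * x) := by
      have hg := (hasSum_geometric_of_lt_one hx0.le hx1).mul_left (9 * (1 - x) * x)
      have heq : (fun n : ℕ => 9 * (1 - x) * x * x ^ n) = fun n : ℕ => 9 * (1 - x) * x ^ (n + 1) := by
        funext n
        rw [pow_succ]
        ring
      have hval : 9 * (1 - x) * x * (1 - x)⁻¹ = 9 * x := by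
        field_simp
      rw [heq, hval] at hg
      exact hg
    have e1 : ∑' n : ℕ, ENNReal.ofReal (9 * x ^ (n + 1) / ((n : ℝ) + 1))
        = ENNReal.ofReal (9 * L) := by
      have sh : ∀ n : ℕ, 9 * x ^ (n + 1) / ((n : ℝ) + 1) = 9 * (x ^ (n + 1) / ((n : ℝ) + 1)) := by
        intro n; ring
      simp only [sh]
      rw [← hlogsum.tsum_eq, ← ENNReal.ofReal_tsum_of_nonneg (fun n => by positivity)
        hlogsum.summable]
    have e2 : ∑' n : ℕ, ENNReal.ofReal (9 * (1 - x) * x ^ (n + 1))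
        = ENNReal.ofReal (9 * x) := by
      rw [← hgeosum.tsum_eq, ← ENNReal.ofReal_tsum_of_nonneg (fun n => by positivity)
        hgeosum.summable]
    have cast1 : ∀ n : ℕ, ((n + 1 : ℕ) : ℝ) = (n : ℝ) + 1 := by intro n; push_cast; ring
    calc (∑' n : ℕ, ENNReal.ofReal (9 * x ^ (n + 1) / ((n + 1 : ℕ) : ℝ)))
        + ∑' n : ℕ, ENNReal.ofReal (9 * (1 - x) * x ^ (n + 1))
        = ENNReal.ofReal (9 * L) + ENNReal.ofReal (9 * x) := by
          rw [e2, ← e1]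
          congr 1
          apply tsum_congr
          intro n
          rw [cast1]
      _ = ENNReal.ofReal (9 * L + 9 * x) := by
          rw [ENNReal.ofReal_add (by positivity) (by positivity)]
      _ ≤ ENNReal.ofReal (18 * L) := ENNReal.ofReal_le_ofReal (by linarith)
  -- assemble
  calc ENNReal.ofReal lam *
      ∑' p : {p : ℤ × ℤ // Λ₁ ^ 2 < 1 + nsq p},
        ENNReal.ofReal (1 / (Real.exp (lam * (1 + nsq p.1)) - 1))
      = ∑' p : {p : ℤ × ℤ // Λ₁ ^ 2 < 1 + nsq p},
        ENNReal.ofReal (lam * (1 / (Real.exp (lam * (1 + nsq p.1)) - 1))) := step1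
    _ ≤ ∑' p : {p : ℤ × ℤ // Λ₁ ^ 2 < 1 + nsq p},
        ENNReal.ofReal (Mfa x (Λ₁ ^ 2) (jp p)) := ENNReal.tsum_le_tsum step2
    _ = ∑' p : {p : ℤ × ℤ // Λ₁ ^ 2 < 1 + nsq p}, ∑' i : ℕ,
        (if jp p ≤ i then
          ENNReal.ofReal (Mfa x (Λ₁ ^ 2) i - Mfa x (Λ₁ ^ 2) (i + 1)) else 0) :=
        tsum_congr step3
    _ = ∑' i : ℕ, ∑' p : {p : ℤ × ℤ // Λ₁ ^ 2 < 1 + nsq p},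
        (if jp p ≤ i then
          ENNReal.ofReal (Mfa x (Λ₁ ^ 2) i - Mfa x (Λ₁ ^ 2) (i + 1)) else 0) :=
        ENNReal.tsum_comm
    _ ≤ ∑' i : ℕ, (if i = 0 then 0 else
        ENNReal.ofReal (9 * x ^ i / i) + ENNReal.ofReal (9 * (1 - x) * x ^ i)) :=
        ENNReal.tsum_le_tsum step5
    _ ≤ ENNReal.ofReal (18 * L) := step6
    _ = ENNReal.ofReal (18 * Real.log (1 / (1 - Real.exp (-(1/2 * lam * Λ₁ ^ 2))))) := by
        rw [hLdef, hxdef]
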